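/- (Sharpness of the weighted-average mixture bound.) Let W be an integrable real random variable, let γ_0, …, γ_K ≥ 0 with Σ_{k=0}^{K} γ_k = 1, and fix 0 ≤ l ≤ l' ≤ K with γ̄ := Σ_{k=l}^{l'} γ_k > 0. Then there exist distribution functions F_{W_0}, …, F_{W_K} of integrable real random variables such that F_W(w) = Σ_{k=0}^{K} γ_k · F_{W_k}(w) for all w ∈ ℝ and Σ_{k=l}^{l'} (γ_k/γ̄) · E[W_k] = E[F_W^{-1}(U) | U ≤ γ̄]; in particular, each F_{W_k} may be taken to be the conditional distribution of F_W^{-1}(U) given that U lies in a suitable subinterval of [0,1] of length γ_k, with the intervals for k ∈ {l,…,l'} partitioning [0, γ̄]. -/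

import Mathlib

open MeasureTheory ProbabilityTheory

/-- CDF of a random variable `W` under a measure `μ`. -/
noncomputable def cdfOf {Ω : Type*} [MeasurableSpace Ω] (μ : MeasureTheory.Measure Ω)
    (W : Ω → ℝ) (w : ℝ) : ℝ :=
  (μ {ω | W ω ≤ w}).toReal

/-- Quantile function `F⁻¹(u) = inf {w : F(w) ≥ u}`. -/
noncomputable def quantileFn (F : ℝ → ℝ) (u : ℝ) : ℝ := sInf {w | u ≤ F w}

/-- Lower truncated mean `E[F⁻¹(U) | U ≤ γ]` for `U` uniform on `[0,1]`,
written as `γ⁻¹ ∫_{(0,γ]} F⁻¹(u) du`. -/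
noncomputable def lowerTrunc (F : ℝ → ℝ) (γ : ℝ) : ℝ :=
  γ⁻¹ * ∫ u in Set.Ioc (0 : ℝ) γ, quantileFn F u

/-- Upper truncated mean `E[F⁻¹(U) | U ≥ 1 − γ]` for `U` uniform on `[0,1]`,
written as `γ⁻¹ ∫_{[1−γ,1]} F⁻¹(u) du`. -/
noncomputable def upperTrunc (F : ℝ → ℝ) (γ : ℝ) : ℝ :=
  γ⁻¹ * ∫ u in Set.Ico (1 - γ) (1 : ℝ), quantileFn F u

section aux
lemma aux_quantile_le_iff (μ : Measure ℝ) [IsProbabilityMeasure μ] {u : ℝ}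
    (hu0 : 0 < u) (hu1 : u < 1) (w : ℝ) :
    quantileFn (fun x => cdf μ x) u ≤ w ↔ u ≤ cdf μ w := by
  set S : Set ℝ := {x | u ≤ cdf μ x} with hS
  have hne : S.Nonempty := by
    obtain ⟨x, hx⟩ := ((tendsto_cdf_atTop μ).eventually (eventually_ge_nhds hu1)).exists
    exact ⟨x, hx⟩
  obtain ⟨x0, hx0⟩ := ((tendsto_cdf_atBot μ).eventually (eventually_lt_nhds hu0)).exists
  have hbdd : BddBelow S := by
    refine ⟨x0, fun x hx => ?_⟩
    by_contra h
    push_neg at h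
    exact absurd (hx.trans (monotone_cdf μ h.le)) (not_le.mpr hx0)
  constructor
  · intro h
    have hmem : u ≤ cdf μ (sInf S) := by
      have ht : Filter.Tendsto (fun x => cdf μ x) (nhdsWithin (sInf S) (Set.Ioi (sInf S)))
          (nhds (cdf μ (sInf S))) :=
        ((cdf μ).right_continuous (sInf S)).mono_left
          (nhdsWithin_mono _ Set.Ioi_subset_Ici_self)
      refine ge_of_tendsto ht ?_
      filter_upwards [self_mem_nhdsWithin] with x hx
      obtain ⟨s, hs, hsx⟩ := exists_lt_of_csInf_lt hne hx
      exact le_trans hs (monotone_cdf μ hsx.le)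
    exact hmem.trans (monotone_cdf μ h)
  · intro h
    exact csInf_le hbdd h

lemma aux_quantile_monotoneOn (μ : Measure ℝ) [IsProbabilityMeasure μ] :
    MonotoneOn (quantileFn (fun x => cdf μ x)) (Set.Ioo (0:ℝ) 1) := by
  intro u hu v hv huv
  have hv' : v ≤ cdf μ (quantileFn (fun x => cdf μ x) v) :=
    (aux_quantile_le_iff μ hv.1 hv.2 _).mp le_rfl
  exact (aux_quantile_le_iff μ hu.1 hu.2 _).mpr (huv.trans hv')

lemma aux_vol_Ioo_inter_Iic {a b t : ℝ} (hab : a ≤ b) :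
    volume (Set.Ioo a b ∩ Set.Iic t) = ENNReal.ofReal (min b t - min a t) := by
  rcases le_total t a with h | h
  · have : Set.Ioo a b ∩ Set.Iic t = ∅ := by
      ext x; simp only [Set.mem_inter_iff, Set.mem_Ioo, Set.mem_Iic, Set.mem_empty_iff_false,
        iff_false, not_and]
      rintro ⟨hxa, hxb⟩ hxt; linarith
    rw [this, min_eq_right h, min_eq_right (h.trans hab)]
    simp
  · rcases lt_or_ge t b with h2 | h2
    · have : Set.Ioo a b ∩ Set.Iic t = Set.Ioc a t := by
        ext x; simp only [Set.mem_inter_iff, Set.mem_Ioo, Set.mem_Iic, Set.mem_Ioc]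
        constructor
        · rintro ⟨⟨h1, _⟩, h3⟩; exact ⟨h1, h3⟩
        · rintro ⟨h1, h3⟩; exact ⟨⟨h1, lt_of_le_of_lt h3 h2⟩, h3⟩
      rw [this, min_eq_right h2.le, min_eq_left h, Real.volume_Ioc]
    · have : Set.Ioo a b ∩ Set.Iic t = Set.Ioo a b := by
        rw [Set.inter_eq_left]; intro x hx; exact le_trans hx.2.le h2
      rw [this, min_eq_left h2, min_eq_left (hab.trans h2), Real.volume_Ioo]

lemma aux_map (μ : Measure ℝ) [IsProbabilityMeasure μ] :
    (volume.restrict (Set.Ioo (0:ℝ) 1)).map (quantileFn (fun x => cdf μ x)) = μ := by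
  set Q := quantileFn (fun x => cdf μ x) with hQ
  have hQm : AEMeasurable Q (volume.restrict (Set.Ioo (0:ℝ) 1)) :=
    aemeasurable_restrict_of_monotoneOn measurableSet_Ioo (aux_quantile_monotoneOn μ)
  have key : ∀ w, ((volume.restrict (Set.Ioo (0:ℝ) 1)).map Q) (Set.Iic w)
      = ENNReal.ofReal (cdf μ w) := by
    intro w
    rw [Measure.map_apply_of_aemeasurable hQm measurableSet_Iic,
        Measure.restrict_apply' measurableSet_Ioo]
    have hset : Q ⁻¹' Set.Iic w ∩ Set.Ioo 0 1 = Set.Ioo (0:ℝ) 1 ∩ Set.Iic (cdf μ w) := by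
      ext u
      simp only [Set.mem_inter_iff, Set.mem_preimage, Set.mem_Iic, Set.mem_Ioo]
      constructor
      · rintro ⟨h1, h2⟩; exact ⟨h2, (aux_quantile_le_iff μ h2.1 h2.2 w).mp h1⟩
      · rintro ⟨h2, h1⟩; exact ⟨(aux_quantile_le_iff μ h2.1 h2.2 w).mpr h1, h2⟩
    rw [hset, aux_vol_Ioo_inter_Iic (by norm_num : (0:ℝ) ≤ 1),
        min_eq_right (cdf_le_one μ w), min_eq_left (cdf_nonneg μ w), sub_zero]
  haveI : IsFiniteMeasure ((volume.restrict (Set.Ioo (0:ℝ) 1)).map Q) := by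
    constructor
    rw [Measure.map_apply_of_aemeasurable hQm MeasurableSet.univ,
        Measure.restrict_apply' measurableSet_Ioo]
    simp
  refine Measure.ext_of_Iic _ _ (fun w => ?_)
  rw [key w, ofReal_cdf]

lemma aux_int (μ : Measure ℝ) [IsProbabilityMeasure μ] (h : Integrable (fun x : ℝ => x) μ) :
    IntegrableOn (quantileFn (fun x => cdf μ x)) (Set.Ioo (0:ℝ) 1) := by
  have hQm : AEMeasurable (quantileFn (fun x => cdf μ x)) (volume.restrict (Set.Ioo (0:ℝ) 1)) :=
    aemeasurable_restrict_of_monotoneOn measurableSet_Ioo (aux_quantile_monotoneOn μ)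
  have h' : Integrable (fun x : ℝ => x)
      ((volume.restrict (Set.Ioo (0:ℝ) 1)).map (quantileFn (fun x => cdf μ x))) := by
    rw [aux_map μ]; exact h
  exact (integrable_map_measure h'.aestronglyMeasurable hQm).mp h'

end aux

/-- sharpness of the weighted-average mixture lower bound: for
any integrable `W`, nonnegative weights `γ_0,…,γ_K` summing to one and
`l ≤ l' ≤ K` with `γ̄ := Σ_{k=l}^{l'} γ_k > 0`, there exist distributions
(probability measures on `ℝ` with finite mean) `ν_0,…,ν_K` whose CDFs mix to
`F_W` and whose weighted average of means attains the lower truncated mean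
`E[F_W⁻¹(U) | U ≤ γ̄]`. -/

theorem weighted_average_mixture_lower_bound_sharp
    {Ω : Type*} [MeasurableSpace Ω] (P : Measure Ω) [IsProbabilityMeasure P]
    (K : ℕ) (W : Ω → ℝ) (γ : ℕ → ℝ)
    (hWm : Measurable W) (hW : Integrable W P)
    (hγ : ∀ k ≤ K, 0 ≤ γ k) (hsum : ∑ k ∈ Finset.range (K + 1), γ k = 1)
    (l l' : ℕ) (hll' : l ≤ l') (hl'K : l' ≤ K)
    (hγbar : 0 < ∑ k ∈ Finset.Icc l l', γ k) :
    ∃ ν : ℕ → Measure ℝ,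
      (∀ k ≤ K, IsProbabilityMeasure (ν k)) ∧
      (∀ k ≤ K, Integrable (fun x : ℝ => x) (ν k)) ∧
      (∀ w : ℝ, cdfOf P W w
          = ∑ k ∈ Finset.range (K + 1), γ k * (ν k (Set.Iic w)).toReal) ∧
      (∑ k ∈ Finset.Icc l l',
          (γ k / ∑ j ∈ Finset.Icc l l', γ j) * ∫ x, x ∂(ν k)
        = lowerTrunc (cdfOf P W) (∑ k ∈ Finset.Icc l l', γ k)) := by
  classical
  set μ := P.map W with hμdef
  haveI : IsProbabilityMeasure μ := Measure.isProbabilityMeasure_map hWm.aemeasurable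
  have hF : cdfOf P W = fun w => cdf μ w := by
    funext w
    rw [cdfOf, cdf_eq_real, measureReal_def, hμdef, Measure.map_apply hWm measurableSet_Iic]
    rfl
  set Q := quantileFn (fun x => cdf μ x) with hQdef
  have hid : Integrable (fun x : ℝ => x) μ := by
    rw [hμdef]
    exact (integrable_map_measure (g := fun x : ℝ => x) measurable_id.aestronglyMeasurable
      hWm.aemeasurable).mpr hW
  have hQint : IntegrableOn Q (Set.Ioo (0:ℝ) 1) := aux_int μ hid
  -- index bookkeeping
  set π : ℕ → ℕ := fun m => if m ≤ l' - l then l + m else if m ≤ l' then m - (l' - l + 1) else m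
    with hπdef
  set o : ℕ → ℕ := fun k => if k < l then l' - l + 1 + k else if k ≤ l' then k - l else k
    with hodef
  have hπo : ∀ k, k ≤ K → π (o k) = k := by
    intro k hk
    simp only [hπdef, hodef]
    split_ifs <;> omega
  have hoπ : ∀ m, m ≤ K → o (π m) = m := by
    intro m hm
    simp only [hπdef, hodef]
    split_ifs <;> omega
  have hoK : ∀ k, k ≤ K → o k ≤ K := by
    intro k hk; simp only [hodef]; split_ifs <;> omega
  have hπK : ∀ m, m ≤ K → π m ≤ K := by
    intro m hm; simp only [hπdef]; split_ifs <;> omega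
  set S : ℕ → ℝ := fun m => ∑ j ∈ Finset.range m, γ (π j) with hSdef
  have hS0 : S 0 = 0 := by simp [hSdef]
  have hSsucc : ∀ m, S (m + 1) = S m + γ (π m) := fun m => Finset.sum_range_succ _ m
  have hSmono : ∀ m n, m ≤ n → n ≤ K + 1 → S m ≤ S n := by
    intro m n hmn hn
    apply Finset.sum_le_sum_of_subset_of_nonneg (Finset.range_subset_range.mpr hmn)
    intro j hj _
    exact hγ (π j) (hπK j (by simp only [Finset.mem_range] at hj; omega))
  have hStot : S (K + 1) = 1 := by
    rw [hSdef, ← hsum]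
    exact Finset.sum_nbij' π o
      (fun m hm => by simp only [Finset.mem_range] at *; have := hπK m (by omega); omega)
      (fun k hk => by simp only [Finset.mem_range] at *; have := hoK k (by omega); omega)
      (fun m hm => hoπ m (by simp only [Finset.mem_range] at hm; omega))
      (fun k hk => hπo k (by simp only [Finset.mem_range] at hk; omega))
      (fun m hm => rfl)
  have hSblock : S (l' - l + 1) = ∑ k ∈ Finset.Icc l l', γ k := by
    rw [hSdef, ← Finset.Ico_add_one_right_eq_Icc, Finset.sum_Ico_eq_sum_range]
    have hn : l' + 1 - l = l' - l + 1 := by omega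
    rw [hn]
    refine Finset.sum_congr rfl (fun j hj => ?_)
    simp only [Finset.mem_range] at hj
    have : π j = l + j := by simp only [hπdef]; split_ifs <;> omega
    rw [this]
  -- the measures
  set ν : ℕ → Measure ℝ := fun k => if γ k = 0 then Measure.dirac 0 else
    (ENNReal.ofReal (γ k))⁻¹ • ((volume.restrict (Set.Ioo (S (o k)) (S (o k) + γ k))).map Q)
    with hνdef
  -- facts for the nonzero case
  have hfacts : ∀ k, k ≤ K → γ k ≠ 0 →
      0 ≤ S (o k) ∧ S (o k) + γ k ≤ 1 ∧
      Set.Ioo (S (o k)) (S (o k) + γ k) ⊆ Set.Ioo (0:ℝ) 1 := by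
    intro k hk hk0
    have hb : S (o k) + γ k = S (o k + 1) := by rw [hSsucc, hπo k hk]
    have ha0 : 0 ≤ S (o k) := hS0 ▸ hSmono 0 (o k) (Nat.zero_le _) (by have := hoK k hk; omega)
    have hb1 : S (o k) + γ k ≤ 1 := by
      rw [hb, ← hStot]
      exact hSmono (o k + 1) (K + 1) (by have := hoK k hk; omega) le_rfl
    exact ⟨ha0, hb1, Set.Ioo_subset_Ioo ha0 hb1⟩
  have hQm : ∀ k, k ≤ K → γ k ≠ 0 →
      AEMeasurable Q (volume.restrict (Set.Ioo (S (o k)) (S (o k) + γ k))) := by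
    intro k hk hk0
    exact aemeasurable_restrict_of_monotoneOn measurableSet_Ioo
      ((aux_quantile_monotoneOn μ).mono (hfacts k hk hk0).2.2)
  refine ⟨ν, ?_, ?_, ?_, ?_⟩
  · -- probability measures
    intro k hk
    simp only [hνdef]
    split_ifs with h
    · infer_instance
    constructor
    have hγk : 0 < γ k := lt_of_le_of_ne (hγ k hk) (Ne.symm h)
    rw [Measure.smul_apply, Measure.map_apply_of_aemeasurable (hQm k hk h) MeasurableSet.univ,
        Set.preimage_univ, Measure.restrict_apply' measurableSet_Ioo, Set.univ_inter,
        Real.volume_Ioo, add_sub_cancel_left, smul_eq_mul]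
    exact ENNReal.inv_mul_cancel (ENNReal.ofReal_pos.mpr hγk).ne' ENNReal.ofReal_ne_top
  · -- integrable
    intro k hk
    simp only [hνdef]
    split_ifs with h
    · refine ⟨measurable_id.aestronglyMeasurable, ?_⟩
      simp [HasFiniteIntegral, lintegral_dirac]
    refine Integrable.smul_measure ?_ (by simp [lt_of_le_of_ne (hγ k hk) (Ne.symm h)])
    exact (integrable_map_measure aestronglyMeasurable_id (hQm k hk h)).mpr
      (hQint.mono_set (hfacts k hk h).2.2)
  · -- CDF mixing
    intro w
    rw [hF]
    set t := cdf μ w with htdef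
    have key : ∀ k ∈ Finset.range (K + 1),
        γ k * (ν k (Set.Iic w)).toReal = min (S (o k + 1)) t - min (S (o k)) t := by
      intro k hk
      simp only [Finset.mem_range] at hk
      have hk' : k ≤ K := by omega
      by_cases h : γ k = 0
      · rw [h, zero_mul, hSsucc, hπo k hk', h, add_zero, sub_self]
      have hγk : 0 < γ k := lt_of_le_of_ne (hγ k hk') (Ne.symm h)
      obtain ⟨ha0, hb1, hsub⟩ := hfacts k hk' h
      have hb : S (o k) + γ k = S (o k + 1) := by rw [hSsucc, hπo k hk']
      have hνk : ν k (Set.Iic w)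
          = (ENNReal.ofReal (γ k))⁻¹ *
            volume (Set.Ioo (S (o k)) (S (o k) + γ k) ∩ Set.Iic t) := by
        simp only [hνdef, if_neg h]
        rw [Measure.smul_apply, Measure.map_apply_of_aemeasurable (hQm k hk' h) measurableSet_Iic,
            Measure.restrict_apply' measurableSet_Ioo, smul_eq_mul]
        have hset : Q ⁻¹' Set.Iic w ∩ Set.Ioo (S (o k)) (S (o k) + γ k)
            = Set.Ioo (S (o k)) (S (o k) + γ k) ∩ Set.Iic t := by
          ext u
          simp only [Set.mem_inter_iff, Set.mem_preimage, Set.mem_Iic]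
          constructor
          · rintro ⟨h1, h2⟩
            have hu := hsub h2
            exact ⟨h2, (aux_quantile_le_iff μ hu.1 hu.2 w).mp h1⟩
          · rintro ⟨h2, h1⟩
            have hu := hsub h2
            exact ⟨(aux_quantile_le_iff μ hu.1 hu.2 w).mpr h1, h2⟩
        rw [hset]
      have hab : S (o k) ≤ S (o k) + γ k := by linarith
      have hminle : min (S (o k)) t ≤ min (S (o k) + γ k) t := min_le_min hab le_rfl
      rw [hνk, aux_vol_Ioo_inter_Iic hab, ← hb]
      rw [ENNReal.toReal_mul, ENNReal.toReal_inv, ENNReal.toReal_ofReal (hγ k hk'),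
          ENNReal.toReal_ofReal (by linarith)]
      field_simp
    rw [Finset.sum_congr rfl key]
    have hre : ∑ k ∈ Finset.range (K + 1), (min (S (o k + 1)) t - min (S (o k)) t)
        = ∑ m ∈ Finset.range (K + 1), (min (S (m + 1)) t - min (S m) t) := by
      exact Finset.sum_nbij' o π
        (fun k hk => by simp only [Finset.mem_range] at *; have := hoK k (by omega); omega)
        (fun m hm => by simp only [Finset.mem_range] at *; have := hπK m (by omega); omega)
        (fun k hk => hπo k (by simp only [Finset.mem_range] at hk; omega))
        (fun m hm => hoπ m (by simp only [Finset.mem_range] at hm; omega))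
        (fun k hk => rfl)
    rw [hre, Finset.sum_range_sub (fun m => min (S m) t), hS0, hStot]
    rw [min_eq_right (cdf_le_one μ w), min_eq_left (cdf_nonneg μ w), sub_zero]
  · -- means
    set gbar := ∑ j ∈ Finset.Icc l l', γ j with hgbar
    have key2 : ∀ k ∈ Finset.Icc l l',
        (γ k / gbar) * ∫ x, x ∂(ν k)
          = gbar⁻¹ * ∫ u in Set.Ioo (S (o k)) (S (o k + 1)), Q u := by
      intro k hk
      simp only [Finset.mem_Icc] at hk
      have hk' : k ≤ K := le_trans hk.2 hl'K
      have hb : S (o k + 1) = S (o k) + γ k := by rw [hSsucc, hπo k hk']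
      by_cases h : γ k = 0
      · rw [h, zero_div, zero_mul, hb, h, add_zero, Set.Ioo_self, Measure.restrict_empty,
          integral_zero_measure, mul_zero]
      have hint : ∫ x, x ∂(ν k) = (γ k)⁻¹ * ∫ u in Set.Ioo (S (o k)) (S (o k) + γ k), Q u := by
        simp only [hνdef, if_neg h]
        rw [integral_smul_measure, integral_map (f := fun x : ℝ => x) (hQm k hk' h) measurable_id.aestronglyMeasurable,
            ENNReal.toReal_inv, ENNReal.toReal_ofReal (hγ k hk'), smul_eq_mul]
      rw [hint, hb]
      field_simp
    rw [Finset.sum_congr rfl key2, ← Finset.mul_sum]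
    have hre2 : ∑ k ∈ Finset.Icc l l', ∫ u in Set.Ioo (S (o k)) (S (o k + 1)), Q u
        = ∑ i ∈ Finset.range (l' - l + 1), ∫ u in Set.Ioo (S i) (S (i + 1)), Q u := by
      rw [← Finset.Ico_add_one_right_eq_Icc, Finset.sum_Ico_eq_sum_range]
      have hn : l' + 1 - l = l' - l + 1 := by omega
      rw [hn]
      refine Finset.sum_congr rfl (fun i hi => ?_)
      simp only [Finset.mem_range] at hi
      have : o (l + i) = i := by simp only [hodef]; split_ifs <;> omega
      rw [this]
    have hQint' : IntegrableOn Q (Set.Icc (0:ℝ) 1) := by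
      rwa [IntegrableOn, ← Measure.restrict_congr_set Ioo_ae_eq_Icc]
    have hSnonneg : ∀ m, m ≤ K + 1 → 0 ≤ S m := fun m hm =>
      hS0 ▸ hSmono 0 m (Nat.zero_le _) hm
    have hSle1 : ∀ m, m ≤ K + 1 → S m ≤ 1 := fun m hm => hStot ▸ hSmono m (K + 1) hm le_rfl
    have hii : ∀ i < l' - l + 1, IntervalIntegrable Q volume (S i) (S (i + 1)) := by
      intro i hi
      have hi1 : i + 1 ≤ K + 1 := by omega
      have hle : S i ≤ S (i + 1) := hSmono i (i + 1) (Nat.le_succ i) hi1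
      refine IntegrableOn.intervalIntegrable ?_
      rw [Set.uIcc_of_le hle]
      exact hQint'.mono_set (Set.Icc_subset_Icc (hSnonneg i (by omega)) (hSle1 (i + 1) hi1))
    have hre3 : ∑ i ∈ Finset.range (l' - l + 1), ∫ u in Set.Ioo (S i) (S (i + 1)), Q u
        = ∫ u in Set.Ioc (0:ℝ) gbar, Q u := by
      have h1 : ∀ i ∈ Finset.range (l' - l + 1),
          ∫ u in Set.Ioo (S i) (S (i + 1)), Q u = ∫ u in (S i)..(S (i + 1)), Q u := by
        intro i hi
        simp only [Finset.mem_range] at hi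
        rw [intervalIntegral.integral_of_le (hSmono i (i + 1) (Nat.le_succ i) (by omega)),
            integral_Ioc_eq_integral_Ioo]
      rw [Finset.sum_congr rfl h1,
          intervalIntegral.sum_integral_adjacent_intervals hii,
          hS0, hSblock,
          intervalIntegral.integral_of_le hγbar.le]
    rw [hre2, hre3, lowerTrunc, hF]
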